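/- Let E ⊂ ℝ² be a measurable set of finite measure that is Steiner symmetric with respect to both coordinate axes (E = E† up to null sets). Then for any rectangle R centered at the origin with sides parallel to the coordinate axes, and any y ∈ ℝ², |(R + y) ∩ E| ≤ |R ∩ E|. -/

import Mathlib

open MeasureTheory Set

noncomputable section

abbrev R2 := ℝ × ℝ

/-- Vertical slice of E at abscissa x. -/
def vslice (E : Set R2) (x : ℝ) : Set ℝ := {t | (x, t) ∈ E}

/-- Horizontal slice of E at ordinate y. -/
def hslice (E : Set R2) (y : ℝ) : Set ℝ := {t | (t, y) ∈ E}

/-- Vertical Steiner symmetrization E^♯. -/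
def steinerV (E : Set R2) : Set R2 :=
  {p | 0 < volume (vslice E p.1) ∧ |p.2| ≤ (volume (vslice E p.1)).toReal / 2}

/-- Horizontal Steiner symmetrization E^♭. -/
def steinerH (E : Set R2) : Set R2 :=
  {p | 0 < volume (hslice E p.2) ∧ |p.1| ≤ (volume (hslice E p.2)).toReal / 2}

/-- Double Steiner symmetrization E† = (E^♯)^♭. -/
def dagger (E : Set R2) : Set R2 := steinerH (steinerV E)

/-- Key 1D lemma: a set `A ⊆ ℝ` that contains, with any element `t`, every nonzero
`s` with `|s| ≤ |t|`, absorbs more of a centered interval than of any translate. -/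
lemma oneD_translate {A : Set ℝ} (hA : ∀ t ∈ A, ∀ s : ℝ, s ≠ 0 → |s| ≤ |t| → s ∈ A)
    (b c : ℝ) :
    volume (Icc (-b + c) (b + c) ∩ A) ≤ volume (Icc (-b) b ∩ A) := by
  by_cases hP : BddAbove {t ∈ A | 0 < t}
  · by_cases hne : ({t ∈ A | 0 < t}).Nonempty
    · set β := sSup {t ∈ A | 0 < t} with hβ
      have hne2 := hne
      obtain ⟨t0, ht0A, ht0pos⟩ := hne2
      have hβpos : 0 < β := lt_of_lt_of_le ht0pos (le_csSup hP ⟨ht0A, ht0pos⟩)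
      have habs : ∀ t ∈ A, t ≠ 0 → |t| ∈ A := by
        intro t ht htne
        exact hA t ht |t| (abs_ne_zero.mpr htne) (le_of_eq (abs_abs t))
      have hsub : A ⊆ Icc (-β) β ∪ {0} := by
        intro t ht
        rcases eq_or_ne t 0 with h0 | h0
        · exact Or.inr h0
        · left
          have h1 : |t| ∈ A := habs t ht h0
          have h2 : |t| ≤ β := le_csSup hP ⟨h1, abs_pos.mpr h0⟩
          exact abs_le.mp h2
      have hsup : ∀ s : ℝ, s ≠ 0 → |s| < β → s ∈ A := by
        intro s hs hlt
        obtain ⟨t, ⟨htA, htpos⟩, hst⟩ := exists_lt_of_lt_csSup hne hlt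
        exact hA t htA s hs (le_of_lt (lt_of_lt_of_le hst (le_abs_self t)))
      calc volume (Icc (-b + c) (b + c) ∩ A)
          ≤ volume (Icc (-b + c) (b + c) ∩ (Icc (-β) β ∪ {0})) :=
            measure_mono (inter_subset_inter_right _ hsub)
        _ ≤ volume ((Icc (-b + c) (b + c) ∩ Icc (-β) β) ∪ {(0:ℝ)}) := by
            apply measure_mono
            rw [inter_union_distrib_left]
            exact union_subset_union_right _ inter_subset_right
        _ ≤ volume (Icc (-b + c) (b + c) ∩ Icc (-β) β) + volume ({(0:ℝ)} : Set ℝ) :=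
            measure_union_le _ _
        _ = volume (Icc (-b + c) (b + c) ∩ Icc (-β) β) := by
            rw [Real.volume_singleton, add_zero]
        _ = ENNReal.ofReal (min (b + c) β - max (-b + c) (-β)) := by
            rw [Icc_inter_Icc, Real.volume_Icc]
        _ ≤ ENNReal.ofReal (min b β - max (-b) (-β)) := by
            apply ENNReal.ofReal_le_ofReal
            rcases le_total b β with h | h
            · have h1 : min (b + c) β ≤ b + c := min_le_left _ _
              have h2 : -b + c ≤ max (-b + c) (-β) := le_max_left _ _
              have h3 : min b β = b := min_eq_left h
              have h4 : max (-b) (-β) = -b := max_eq_left (by linarith)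
              linarith
            · have h1 : min (b + c) β ≤ β := min_le_right _ _
              have h2 : -β ≤ max (-b + c) (-β) := le_max_right _ _
              have h3 : min b β = β := min_eq_right h
              have h4 : max (-b) (-β) = -β := max_eq_right (by linarith)
              linarith
        _ = volume (Icc (-b) b ∩ Icc (-β) β) := by
            rw [Icc_inter_Icc, Real.volume_Icc]
        _ = volume (Icc (-b) b ∩ Ioo (-β) β) := by
            apply le_antisymm
            · calc volume (Icc (-b) b ∩ Icc (-β) β)
                  ≤ volume ((Icc (-b) b ∩ Ioo (-β) β) ∪ {-β, β}) := by
                    apply measure_mono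
                    intro x ⟨hx1, hx2⟩
                    rcases eq_or_ne x (-β) with h | h
                    · exact Or.inr (Or.inl h)
                    rcases eq_or_ne x β with h' | h'
                    · exact Or.inr (Or.inr h')
                    · exact Or.inl ⟨hx1, ⟨lt_of_le_of_ne hx2.1 (Ne.symm h), lt_of_le_of_ne hx2.2 h'⟩⟩
                _ ≤ volume (Icc (-b) b ∩ Ioo (-β) β) + volume ({-β, β} : Set ℝ) :=
                    measure_union_le _ _
                _ = volume (Icc (-b) b ∩ Ioo (-β) β) := by
                    rw [show ({-β, β} : Set ℝ) = {-β} ∪ {β} by rfl]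
                    have : volume ({-β} ∪ {β} : Set ℝ) ≤ 0 := by
                      calc volume ({-β} ∪ {β} : Set ℝ)
                          ≤ volume ({-β} : Set ℝ) + volume ({β} : Set ℝ) := measure_union_le _ _
                        _ = 0 := by simp [Real.volume_singleton]
                    rw [le_antisymm this zero_le, add_zero]
            · exact measure_mono (inter_subset_inter_right _ Ioo_subset_Icc_self)
        _ ≤ volume (Icc (-b) b ∩ A) := by
            calc volume (Icc (-b) b ∩ Ioo (-β) β)
                ≤ volume ((Icc (-b) b ∩ A) ∪ {(0:ℝ)}) := by
                  apply measure_mono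
                  intro x ⟨hx1, hx2⟩
                  rcases eq_or_ne x 0 with h | h
                  · exact Or.inr h
                  · exact Or.inl ⟨hx1, hsup x h (abs_lt.mpr ⟨hx2.1, hx2.2⟩)⟩
              _ ≤ volume (Icc (-b) b ∩ A) + volume ({(0:ℝ)} : Set ℝ) := measure_union_le _ _
              _ = volume (Icc (-b) b ∩ A) := by rw [Real.volume_singleton, add_zero]
    · have hsub : A ⊆ {0} := by
        intro t ht
        by_contra h0
        have : |t| ∈ A := hA t ht |t| (abs_ne_zero.mpr h0) (le_of_eq (abs_abs t))
        exact hne ⟨|t|, this, abs_pos.mpr h0⟩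
      calc volume (Icc (-b + c) (b + c) ∩ A) ≤ volume ({0} : Set ℝ) :=
            measure_mono (inter_subset_right.trans hsub)
        _ = 0 := Real.volume_singleton
        _ ≤ _ := zero_le
  · have hall : ∀ s : ℝ, s ≠ 0 → s ∈ A := by
      intro s hs
      rw [not_bddAbove_iff] at hP
      obtain ⟨t, ⟨htA, htpos⟩, hst⟩ := hP |s|
      exact hA t htA s hs (le_of_lt (lt_of_lt_of_le hst (le_abs_self t)))
    calc volume (Icc (-b + c) (b + c) ∩ A)
        ≤ volume (Icc (-b + c) (b + c)) := measure_mono inter_subset_left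
      _ = ENNReal.ofReal (2 * b) := by rw [Real.volume_Icc]; ring_nf
      _ = volume (Icc (-b) b \ {0}) := by
          rw [measure_diff_null Real.volume_singleton, Real.volume_Icc]; ring_nf
      _ ≤ volume (Icc (-b) b ∩ A) := by
          apply measure_mono
          intro x ⟨hx1, hx2⟩
          exact ⟨hx1, hall x hx2⟩

/-- If E = E† (up to null sets), then for any axis-parallel rectangle R centered
at the origin and any y, |(R + y) ∩ E| ≤ |R ∩ E|. -/
theorem translate_rectangle_intersection_le (E : Set R2) (hE : MeasurableSet E)
    (hfin : volume E < ⊤) (hsym : volume (symmDiff E (dagger E)) = 0)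
    (a b : ℝ) (ha : 0 ≤ a) (hb : 0 ≤ b) (y : R2) :
    volume (((fun p => p + y) '' (Icc (-a) a ×ˢ Icc (-b) b)) ∩ E) ≤
      volume ((Icc (-a) a ×ˢ Icc (-b) b) ∩ E) := by
  -- the slice-length profile of the doubly symmetrized set
  set g : ℝ → ENNReal := fun u => volume (vslice E u) with hg
  set N : ℝ → ENNReal := fun s => volume {u | 0 < g u ∧ s ≤ (g u).toReal / 2} with hN
  have hNanti : Antitone N := fun s t h =>
    measure_mono (fun u hu => ⟨hu.1, h.trans hu.2⟩)
  have hDeq : dagger E = {p : R2 | 0 < N |p.2| ∧ |p.1| ≤ (N |p.2|).toReal / 2} := rfl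
  have hgm : Measurable g := measurable_measure_prodMk_left hE
  have hint : ∫⁻ u, g u = volume E := by
    rw [show (volume : Measure R2) = (volume : Measure ℝ).prod volume from
      (Measure.volume_eq_prod ℝ ℝ), Measure.prod_apply hE]
    rfl
  have hNfin : ∀ s : ℝ, 0 < s → N s < ⊤ := by
    intro s hs
    have hsub : {u | 0 < g u ∧ s ≤ (g u).toReal / 2} ⊆ {u | ENNReal.ofReal s ≤ g u} := by
      intro u ⟨h1, h2⟩
      have hne : g u ≠ ⊤ := by
        intro htop
        rw [htop] at h2
        simp at h2; linarith
      rw [Set.mem_setOf_eq, ENNReal.ofReal_le_iff_le_toReal hne]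
      have : (0:ℝ) ≤ (g u).toReal := ENNReal.toReal_nonneg
      linarith
    have hmk := mul_meas_ge_le_lintegral₀ (μ := volume) hgm.aemeasurable (ENNReal.ofReal s)
    rw [hint] at hmk
    have hlt : ENNReal.ofReal s * volume {u | ENNReal.ofReal s ≤ g u} < ⊤ :=
      lt_of_le_of_lt hmk hfin
    have hvol : volume {u | ENNReal.ofReal s ≤ g u} < ⊤ := by
      by_contra h
      rw [not_lt, top_le_iff] at h
      rw [h, ENNReal.mul_top ((ENNReal.ofReal_pos.mpr hs).ne')] at hlt
      exact absurd hlt (lt_irrefl _)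
    exact lt_of_le_of_lt (measure_mono hsub) hvol
  have hNm : Measurable N := hNanti.measurable
  have hDm : MeasurableSet (dagger E) := by
    rw [hDeq]
    have h1 : Measurable fun p : R2 => N |p.2| := hNm.comp (measurable_snd.abs)
    have h2 : MeasurableSet {p : R2 | 0 < N |p.2|} := measurableSet_lt measurable_const h1
    have h3 : MeasurableSet {p : R2 | |p.1| ≤ (N |p.2|).toReal / 2} :=
      measurableSet_le (measurable_fst.abs) ((h1.ennreal_toReal).div_const 2)
    exact h2.inter h3
  -- slices of dagger E are "balanced"
  have hhor : ∀ t : ℝ, ∀ x ∈ {x : ℝ | (x, t) ∈ dagger E}, ∀ s : ℝ, s ≠ 0 → |s| ≤ |x| →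
      s ∈ {x : ℝ | (x, t) ∈ dagger E} := by
    intro t x hx s _ hle
    rw [hDeq] at hx ⊢
    exact ⟨hx.1, hle.trans hx.2⟩
  have hvert : ∀ x : ℝ, ∀ t ∈ {t : ℝ | (x, t) ∈ dagger E}, ∀ s : ℝ, s ≠ 0 → |s| ≤ |t| →
      s ∈ {t : ℝ | (x, t) ∈ dagger E} := by
    intro x t ht s hs hle
    rw [hDeq] at ht ⊢
    have h1 : N |t| ≤ N |s| := hNanti hle
    have h2 : N |s| < ⊤ := hNfin |s| (abs_pos.mpr hs)
    have h3 : (N |t|).toReal ≤ (N |s|).toReal := ENNReal.toReal_mono h2.ne h1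
    refine ⟨lt_of_lt_of_le ht.1 h1, ht.2.trans (by linarith)⟩
  -- reduce from E to dagger E
  have hED : E =ᵐ[volume] dagger E := measure_symmDiff_eq_zero_iff.mp hsym
  have e1 : volume (((fun p => p + y) '' (Icc (-a) a ×ˢ Icc (-b) b)) ∩ E)
      = volume (((fun p => p + y) '' (Icc (-a) a ×ˢ Icc (-b) b)) ∩ dagger E) :=
    measure_congr (Filter.EventuallyEq.inter (Filter.EventuallyEq.rfl) hED)
  have e2 : volume ((Icc (-a) a ×ˢ Icc (-b) b) ∩ E)
      = volume ((Icc (-a) a ×ˢ Icc (-b) b) ∩ dagger E) :=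
    measure_congr (Filter.EventuallyEq.inter (Filter.EventuallyEq.rfl) hED)
  -- the translated rectangle
  have himg : (fun p => p + y) '' (Icc (-a) a ×ˢ Icc (-b) b)
      = Icc (-a + y.1) (a + y.1) ×ˢ Icc (-b + y.2) (b + y.2) := by
    ext ⟨u, v⟩
    simp only [Set.mem_image, Set.mem_prod, Set.mem_Icc, Prod.ext_iff, Prod.fst_add,
      Prod.snd_add, Prod.exists]
    constructor
    · rintro ⟨p, q, ⟨⟨h1, h2⟩, h3, h4⟩, he1, he2⟩
      refine ⟨⟨by linarith, by linarith⟩, by linarith, by linarith⟩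
    · rintro ⟨⟨h1, h2⟩, h3, h4⟩
      exact ⟨u - y.1, v - y.2, ⟨⟨by linarith, by linarith⟩, by linarith, by linarith⟩,
        by ring, by ring⟩
  rw [e1, e2, himg]
  have hprodrw : (volume : Measure R2) = (volume : Measure ℝ).prod volume :=
    Measure.volume_eq_prod ℝ ℝ
  -- step A : horizontal translation
  have stepA : volume ((Icc (-a + y.1) (a + y.1) ×ˢ Icc (-b + y.2) (b + y.2)) ∩ dagger E)
      ≤ volume ((Icc (-a) a ×ˢ Icc (-b + y.2) (b + y.2)) ∩ dagger E) := by
    rw [hprodrw,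
      Measure.prod_apply_symm ((measurableSet_Icc.prod measurableSet_Icc).inter hDm),
      Measure.prod_apply_symm ((measurableSet_Icc.prod measurableSet_Icc).inter hDm)]
    apply lintegral_mono
    intro t
    dsimp only
    by_cases htB : t ∈ Icc (-b + y.2) (b + y.2)
    · have h1 : (fun x => (x, t)) ⁻¹' ((Icc (-a + y.1) (a + y.1) ×ˢ Icc (-b + y.2) (b + y.2))
          ∩ dagger E) = Icc (-a + y.1) (a + y.1) ∩ {x : ℝ | (x, t) ∈ dagger E} := by
        ext x
        simp only [Set.mem_preimage, Set.mem_inter_iff, Set.mem_prod, Set.mem_setOf_eq]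
        constructor
        · rintro ⟨⟨hx, _⟩, hd⟩; exact ⟨hx, hd⟩
        · rintro ⟨hx, hd⟩; exact ⟨⟨hx, htB⟩, hd⟩
      have h2 : (fun x => (x, t)) ⁻¹' ((Icc (-a) a ×ˢ Icc (-b + y.2) (b + y.2))
          ∩ dagger E) = Icc (-a) a ∩ {x : ℝ | (x, t) ∈ dagger E} := by
        ext x
        simp only [Set.mem_preimage, Set.mem_inter_iff, Set.mem_prod, Set.mem_setOf_eq]
        constructor
        · rintro ⟨⟨hx, _⟩, hd⟩; exact ⟨hx, hd⟩
        · rintro ⟨hx, hd⟩; exact ⟨⟨hx, htB⟩, hd⟩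
      rw [h1, h2]
      exact oneD_translate (hhor t) a y.1
    · have h1 : (fun x => (x, t)) ⁻¹' ((Icc (-a + y.1) (a + y.1) ×ˢ Icc (-b + y.2) (b + y.2))
          ∩ dagger E) = ∅ := by
        ext x
        simp only [Set.mem_preimage, Set.mem_inter_iff, Set.mem_prod, Set.mem_empty_iff_false,
          iff_false]
        rintro ⟨⟨_, hB⟩, _⟩
        exact htB hB
      have h2 : (fun x => (x, t)) ⁻¹' ((Icc (-a) a ×ˢ Icc (-b + y.2) (b + y.2))
          ∩ dagger E) = ∅ := by
        ext x
        simp only [Set.mem_preimage, Set.mem_inter_iff, Set.mem_prod, Set.mem_empty_iff_false,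
          iff_false]
        rintro ⟨⟨_, hB⟩, _⟩
        exact htB hB
      rw [h1, h2]
  -- step B : vertical translation
  have stepB : volume ((Icc (-a) a ×ˢ Icc (-b + y.2) (b + y.2)) ∩ dagger E)
      ≤ volume ((Icc (-a) a ×ˢ Icc (-b) b) ∩ dagger E) := by
    rw [hprodrw,
      Measure.prod_apply ((measurableSet_Icc.prod measurableSet_Icc).inter hDm),
      Measure.prod_apply ((measurableSet_Icc.prod measurableSet_Icc).inter hDm)]
    apply lintegral_mono
    intro x
    dsimp only
    by_cases hxA : x ∈ Icc (-a) a
    · have h1 : Prod.mk x ⁻¹' ((Icc (-a) a ×ˢ Icc (-b + y.2) (b + y.2)) ∩ dagger E)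
          = Icc (-b + y.2) (b + y.2) ∩ {t : ℝ | (x, t) ∈ dagger E} := by
        ext t
        simp only [Set.mem_preimage, Set.mem_inter_iff, Set.mem_prod, Set.mem_setOf_eq]
        constructor
        · rintro ⟨⟨_, ht⟩, hd⟩; exact ⟨ht, hd⟩
        · rintro ⟨ht, hd⟩; exact ⟨⟨hxA, ht⟩, hd⟩
      have h2 : Prod.mk x ⁻¹' ((Icc (-a) a ×ˢ Icc (-b) b) ∩ dagger E)
          = Icc (-b) b ∩ {t : ℝ | (x, t) ∈ dagger E} := by
        ext t
        simp only [Set.mem_preimage, Set.mem_inter_iff, Set.mem_prod, Set.mem_setOf_eq]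
        constructor
        · rintro ⟨⟨_, ht⟩, hd⟩; exact ⟨ht, hd⟩
        · rintro ⟨ht, hd⟩; exact ⟨⟨hxA, ht⟩, hd⟩
      rw [h1, h2]
      exact oneD_translate (hvert x) b y.2
    · have h1 : Prod.mk x ⁻¹' ((Icc (-a) a ×ˢ Icc (-b + y.2) (b + y.2)) ∩ dagger E) = ∅ := by
        ext t
        simp only [Set.mem_preimage, Set.mem_inter_iff, Set.mem_prod, Set.mem_empty_iff_false,
          iff_false]
        rintro ⟨⟨hA, _⟩, _⟩
        exact hxA hA
      have h2 : Prod.mk x ⁻¹' ((Icc (-a) a ×ˢ Icc (-b) b) ∩ dagger E) = ∅ := by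
        ext t
        simp only [Set.mem_preimage, Set.mem_inter_iff, Set.mem_prod, Set.mem_empty_iff_false,
          iff_false]
        rintro ⟨⟨hA, _⟩, _⟩
        exact hxA hA
      rw [h1, h2]
  exact stepA.trans stepB

end
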